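/- In the linear Markovian model, the counterfactual value function satisfies V(τ₁,...,τ_m) = Σ_{t=1}^m ψ_t' τ_t, where ψ_m = θ₀ and ψ_t = A'(B')^{m−t−1} μ for t < m, V(τ) = E[Y_m | do(T=τ)] − E[Y_m | do(T=0)]. -/
import Mathlib


open MeasureTheory Matrix Finset

/-- Deterministic expected-state recursion. -/
def expState {p d : ℕ} (A : Matrix (Fin p) (Fin d) ℝ) (B : Matrix (Fin p) (Fin p) ℝ)
    (τ : ℕ → Fin d → ℝ) : ℕ → Fin p → ℝ
  | 0 => fun _ => 0
  | s + 1 => A.mulVec (τ s) + B.mulVec (expState A B τ s)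

lemma expState_dot {p d : ℕ} (A : Matrix (Fin p) (Fin d) ℝ) (B : Matrix (Fin p) (Fin p) ℝ) :
    ∀ (m : ℕ) (v : Fin p → ℝ) (τ : ℕ → Fin d → ℝ),
      v ⬝ᵥ expState A B τ m =
        ∑ s ∈ Finset.range m, (A.transpose.mulVec ((B.transpose ^ (m - s - 1)).mulVec v)) ⬝ᵥ τ s := by
  intro m
  induction m with
  | zero => intro v τ; simp [expState]
  | succ n ih =>
    intro v τ
    rw [Finset.sum_range_succ]
    simp only [expState]
    rw [dotProduct_add, dotProduct_mulVec, dotProduct_mulVec,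
      ← Matrix.mulVec_transpose, ← Matrix.mulVec_transpose, ih]
    have h0 : (A.transpose.mulVec ((B.transpose ^ (n + 1 - n - 1)).mulVec v)) ⬝ᵥ τ n
        = A.transpose.mulVec v ⬝ᵥ τ n := by
      simp
    rw [h0, add_comm]
    congr 1
    apply Finset.sum_congr rfl
    intro s hs
    rw [Finset.mem_range] at hs
    have he : n + 1 - s - 1 = (n - s - 1) + 1 := by omega
    rw [he, pow_succ, ← Matrix.mulVec_mulVec]

/-- Characterization of the counterfactual value function in the linear Markovian model. -/
theorem counterfactual_value_linear {Ω : Type*} {m0 : MeasurableSpace Ω}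
    (μPr : Measure Ω) [IsProbabilityMeasure μPr]
    {p d : ℕ} (m : ℕ) (hm : 1 ≤ m)
    (A : Matrix (Fin p) (Fin d) ℝ) (B : Matrix (Fin p) (Fin p) ℝ)
    (θ₀ : Fin d → ℝ) (μv : Fin p → ℝ)
    (η : ℕ → Ω → Fin p → ℝ) (ε : Ω → ℝ)
    (hηint : ∀ s i, Integrable (fun ω => η s ω i) μPr)
    (hηmean : ∀ s i, ∫ ω, η s ω i ∂μPr = 0)
    (hεint : Integrable ε μPr) (hεmean : ∫ ω, ε ω ∂μPr = 0)
    -- the counterfactual state process under a static intervention τ: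
    (Xc : (ℕ → Fin d → ℝ) → ℕ → Ω → Fin p → ℝ)
    (hXc0 : ∀ τ, Xc τ 0 = fun _ _ => 0)
    (hXcrec : ∀ τ s, Xc τ (s + 1) =
      fun ω => A.mulVec (τ s) + B.mulVec (Xc τ s ω) + η (s + 1) ω)
    -- the dynamic treatment effects:
    (ψ : ℕ → Fin d → ℝ)
    (hψ : ∀ j, ψ j = if j = m then θ₀
      else A.transpose.mulVec ((B.transpose ^ (m - j - 1)).mulVec μv))
    (τ : ℕ → Fin d → ℝ) (hτ0 : τ 0 = fun _ => 0) :
    (∫ ω, (θ₀ ⬝ᵥ τ m + μv ⬝ᵥ Xc τ m ω + ε ω) ∂μPr) -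
      (∫ ω, (θ₀ ⬝ᵥ (fun _ => (0 : ℝ)) + μv ⬝ᵥ Xc (fun _ _ => 0) m ω + ε ω) ∂μPr) =
      ∑ s ∈ Finset.Icc 1 m, ψ s ⬝ᵥ τ s := by
  have key : ∀ (τ' : ℕ → Fin d → ℝ) (s : ℕ),
      (∀ i, Integrable (fun ω => Xc τ' s ω i) μPr) ∧
      (∀ i, ∫ ω, Xc τ' s ω i ∂μPr = expState A B τ' s i) := by
    intro τ' s
    induction s with
    | zero =>
      rw [hXc0]
      exact ⟨fun i => integrable_const 0, fun i => by simp [expState]⟩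
    | succ n ih =>
      rw [hXcrec]
      have hBint : ∀ i, Integrable (fun ω => B.mulVec (Xc τ' n ω) i) μPr := by
        intro i
        simpa [Matrix.mulVec, dotProduct] using
          (integrable_finset_sum Finset.univ (fun j _ => (ih.1 j).const_mul (B i j)))
      constructor
      · intro i
        simp only [Pi.add_apply]
        exact ((integrable_const _).add (hBint i)).add (hηint (n + 1) i)
      · intro i
        simp only [Pi.add_apply]
        have hint1 : Integrable (fun ω => (A *ᵥ τ' n) i + (B *ᵥ Xc τ' n ω) i) μPr :=
          (integrable_const _).add (hBint i)
        rw [integral_add hint1 (hηint (n + 1) i),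
          integral_add (integrable_const _) (hBint i), hηmean, integral_const]
        have hB : ∫ ω, B.mulVec (Xc τ' n ω) i ∂μPr = B.mulVec (expState A B τ' n) i := by
          simp only [Matrix.mulVec, dotProduct]
          rw [integral_finset_sum _ (fun j _ => (ih.1 j).const_mul (B i j))]
          exact Finset.sum_congr rfl fun j _ => by rw [integral_const_mul, (ih.2 j)]
        rw [hB]
        simp [expState]
  have hdot : ∀ (τ' : ℕ → Fin d → ℝ),
      Integrable (fun ω => μv ⬝ᵥ Xc τ' m ω) μPr ∧
      ∫ ω, μv ⬝ᵥ Xc τ' m ω ∂μPr = μv ⬝ᵥ expState A B τ' m := by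
    intro τ'
    constructor
    · simpa [dotProduct] using
        integrable_finset_sum Finset.univ (fun i _ => ((key τ' m).1 i).const_mul (μv i))
    · simp only [dotProduct]
      rw [integral_finset_sum _ (fun i _ => ((key τ' m).1 i).const_mul (μv i))]
      exact Finset.sum_congr rfl fun i _ => by rw [integral_const_mul, (key τ' m).2 i]
  have hI : ∀ (τ' : ℕ → Fin d → ℝ), ∫ ω, (θ₀ ⬝ᵥ τ' m + μv ⬝ᵥ Xc τ' m ω + ε ω) ∂μPr
      = θ₀ ⬝ᵥ τ' m + μv ⬝ᵥ expState A B τ' m := by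
    intro τ'
    have hint2 : Integrable (fun ω => θ₀ ⬝ᵥ τ' m + μv ⬝ᵥ Xc τ' m ω) μPr :=
      (integrable_const _).add (hdot τ').1
    rw [integral_add hint2 hεint,
      integral_add (integrable_const _) (hdot τ').1, hεmean, integral_const, (hdot τ').2]
    simp
  have h2 : (∫ ω, (θ₀ ⬝ᵥ (fun _ => (0 : ℝ)) + μv ⬝ᵥ Xc (fun _ _ => 0) m ω + ε ω) ∂μPr)
      = θ₀ ⬝ᵥ (fun _ => (0 : ℝ)) + μv ⬝ᵥ expState A B (fun _ _ => 0) m := hI (fun _ _ => 0)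
  have h3 : μv ⬝ᵥ expState A B (fun _ _ => 0) m = 0 := by
    rw [expState_dot]
    simp [dotProduct]
  have hsum : ∑ s ∈ Finset.Icc 1 m, ψ s ⬝ᵥ τ s = θ₀ ⬝ᵥ τ m + μv ⬝ᵥ expState A B τ m := by
    rw [expState_dot]
    have hIcc : Finset.Icc 1 m = (Finset.range (m + 1)).erase 0 := by
      ext x
      simp only [Finset.mem_Icc, Finset.mem_erase, Finset.mem_range]
      omega
    rw [hIcc, Finset.sum_erase _ (by rw [hτ0]; simp [dotProduct]), Finset.sum_range_succ]
    have hψm : ψ m = θ₀ := by rw [hψ]; simp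
    rw [hψm, add_comm]
    congr 1
    refine Finset.sum_congr rfl fun s hs => ?_
    rw [Finset.mem_range] at hs
    rw [hψ s, if_neg (by omega)]
  rw [hI τ, h2, h3, hsum]
  simp [dotProduct]
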